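/- Let U ⊆ ℂ be an open set and let (h_n)_{n∈ℕ} be a sequence of functions analytic on U. If the real parts Re h_n converge to 0 locally uniformly on U, then the derivatives h_n' converge to 0 locally uniformly on U. -/

import Mathlib

open Complex Metric Set Real MeasureTheory Filter

private lemma conj_intervalIntegral (f : ℝ → ℂ) (a b : ℝ) :
    ∫ t in a..b, (starRingEnd ℂ) (f t) = (starRingEnd ℂ) (∫ t in a..b, f t) := by
  rw [intervalIntegral, intervalIntegral, map_sub, ← _root_.integral_conj,
    ← _root_.integral_conj]

private lemma conj_circle_zero {U : Set ℂ} (hU : IsOpen U) {h : ℂ → ℂ}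
    (hd : DifferentiableOn ℂ h U) {c : ℂ} {R : ℝ} (hR : 0 < R)
    (hc : closedBall c R ⊆ U) :
    (∮ z in C(c, R), ((z - c) ^ 2)⁻¹ • (starRingEnd ℂ) (h z)) = 0 := by
  have hzero : (∮ z in C(c, R), h z) = 0 := by
    refine circleIntegral_eq_zero_of_differentiable_on_off_countable hR.le
      Set.countable_empty (hd.continuousOn.mono hc) fun z hz => ?_
    exact hd.differentiableAt (hU.mem_nhds (hc (ball_subset_closedBall hz.1)))
  have key : (∮ z in C(c, R), h z)
      = I * ∫ θ in (0:ℝ)..2 * π, circleMap 0 R θ * h (circleMap c R θ) := by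
    rw [circleIntegral, ← intervalIntegral.integral_const_mul]
    refine intervalIntegral.integral_congr fun θ _ => ?_
    simp only [deriv_circleMap, smul_eq_mul]; ring
  have hg : (∫ θ in (0:ℝ)..2 * π, circleMap 0 R θ * h (circleMap c R θ)) = 0 := by
    rw [hzero] at key
    rcases mul_eq_zero.mp key.symm with hI | hX
    · exact absurd hI I_ne_zero
    · exact hX
  have hns : ∀ θ : ℝ, ((circleMap 0 R θ) : ℂ)⁻¹
      = (starRingEnd ℂ) (circleMap 0 R θ) * ((R : ℂ) ^ 2)⁻¹ := by
    intro θ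
    rw [Complex.inv_def]
    congr 1
    rw [← Complex.sq_norm, norm_circleMap_zero, _root_.abs_of_pos hR]
    push_cast
    ring
  calc (∮ z in C(c, R), ((z - c) ^ 2)⁻¹ • (starRingEnd ℂ) (h z))
      = ∫ θ in (0:ℝ)..2 * π, (I * ((R : ℂ) ^ 2)⁻¹) *
          (starRingEnd ℂ) (circleMap 0 R θ * h (circleMap c R θ)) := by
        rw [circleIntegral]
        refine intervalIntegral.integral_congr fun θ _ => ?_
        have h1 : circleMap c R θ - c = circleMap 0 R θ := circleMap_sub_center c R θ
        have h2 : (circleMap 0 R θ : ℂ) ≠ 0 := circleMap_ne_center hR.ne'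
        have hcc : circleMap 0 R θ * (starRingEnd ℂ) (circleMap 0 R θ) = (R : ℂ) ^ 2 := by
          rw [Complex.mul_conj, ← Complex.sq_norm, norm_circleMap_zero, _root_.abs_of_pos hR]
          push_cast; ring
        have hR' : (R : ℂ) ≠ 0 := by exact_mod_cast hR.ne'
        simp only [deriv_circleMap, smul_eq_mul, h1, map_mul]
        field_simp
        linear_combination (-((starRingEnd ℂ) (h (circleMap c R θ)))) * hcc
    _ = (I * ((R : ℂ) ^ 2)⁻¹) *
          ∫ θ in (0:ℝ)..2 * π, (starRingEnd ℂ) (circleMap 0 R θ * h (circleMap c R θ)) := by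
        rw [intervalIntegral.integral_const_mul]
    _ = 0 := by rw [conj_intervalIntegral, hg, map_zero, mul_zero]

private lemma deriv_bound {U : Set ℂ} (hU : IsOpen U) {h : ℂ → ℂ}
    (hd : DifferentiableOn ℂ h U) {c : ℂ} {R ε : ℝ} (hR : 0 < R)
    (hc : closedBall c R ⊆ U) (hε : ∀ z ∈ sphere c R, |(h z).re| ≤ ε) :
    ‖deriv h c‖ ≤ 2 * ε / R := by
  have hcball : c ∈ ball c R := mem_ball_self hR
  have hform := two_pi_I_inv_smul_circleIntegral_sub_sq_inv_smul_of_differentiable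
    hU hc hd hcball
  have hcont : ContinuousOn h (sphere c R) :=
    hd.continuousOn.mono ((sphere_subset_closedBall).trans hc)
  have hk : ContinuousOn (fun z : ℂ => ((z - c) ^ 2)⁻¹) (sphere c R) := by
    refine (((continuous_id.sub continuous_const).pow 2).continuousOn).inv₀ fun z hz hz0 => ?_
    have : z - c = 0 := by
      have := sq_eq_zero_iff.mp hz0; exact this
    have hd : dist z c = R := mem_sphere.mp hz
    rw [mem_sphere_iff_norm] at hz
    rw [this, norm_zero] at hz
    exact hR.ne hz
  have hint1 : CircleIntegrable (fun z => ((z - c) ^ 2)⁻¹ • h z) c R :=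
    (hk.smul hcont).circleIntegrable hR.le
  have hint2 : CircleIntegrable (fun z => ((z - c) ^ 2)⁻¹ • (starRingEnd ℂ) (h z)) c R :=
    (hk.smul ((continuous_conj.comp_continuousOn hcont))).circleIntegrable hR.le
  have hE : (∮ z in C(c, R), ((z - c) ^ 2)⁻¹ • (2 * ((h z).re : ℂ)))
      = ∮ z in C(c, R), ((z - c) ^ 2)⁻¹ • h z := by
    have hsplit : (fun z => ((z - c) ^ 2)⁻¹ • (2 * ((h z).re : ℂ)))
        = fun z => (((z - c) ^ 2)⁻¹ • h z) + (((z - c) ^ 2)⁻¹ • (starRingEnd ℂ) (h z)) := by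
      funext z
      simp only [smul_eq_mul]
      have : (2 * ((h z).re : ℂ)) = h z + (starRingEnd ℂ) (h z) := by
        rw [Complex.add_conj]; push_cast; ring
      rw [this]; ring
    have hadd : (∮ z in C(c, R), ((((z - c) ^ 2)⁻¹ • h z) + (((z - c) ^ 2)⁻¹ • (starRingEnd ℂ) (h z))))
        = (∮ z in C(c, R), ((z - c) ^ 2)⁻¹ • h z)
          + ∮ z in C(c, R), ((z - c) ^ 2)⁻¹ • (starRingEnd ℂ) (h z) := by
      simp only [circleIntegral, smul_add]
      exact intervalIntegral.integral_add hint1.out hint2.out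
    rw [hsplit, hadd, conj_circle_zero hU hd hR hc, add_zero]
  have hbound : ‖∮ z in C(c, R), ((z - c) ^ 2)⁻¹ • (2 * ((h z).re : ℂ))‖
      ≤ 2 * π * R * (2 * ε / R ^ 2) := by
    have := circleIntegral.norm_integral_le_of_norm_le_const (c := c) (R := R)
      (f := fun z => ((z - c) ^ 2)⁻¹ • (2 * ((h z).re : ℂ))) (C := 2 * ε / R ^ 2) hR.le ?_
    · simpa [_root_.abs_of_pos hR] using this
    · intro z hz
      rw [mem_sphere_iff_norm] at hz
      have hz0 : ‖(z - c) ^ 2‖ = R ^ 2 := by rw [norm_pow, hz]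
      rw [norm_smul, norm_inv, hz0]
      have hre : ‖(2 * ((h z).re : ℂ))‖ ≤ 2 * ε := by
        rw [norm_mul]
        simp only [Complex.norm_ofNat, Complex.norm_real, Real.norm_eq_abs]
        have := hε z (by simpa [mem_sphere_iff_norm] using hz)
        nlinarith
      rw [div_eq_mul_inv, mul_comm]
      exact mul_le_mul_of_nonneg_right hre (by positivity)
  rw [← hform, hE.symm]
  rw [norm_smul, norm_inv]
  have hnrm : ‖(2 * (π : ℂ) * I)‖ = 2 * π := by
    simp [norm_mul, Real.pi_nonneg]
  rw [hnrm]
  calc (2 * π)⁻¹ * ‖∮ z in C(c, R), ((z - c) ^ 2)⁻¹ • (2 * ((h z).re : ℂ))‖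
      ≤ (2 * π)⁻¹ * (2 * π * R * (2 * ε / R ^ 2)) := by
        exact mul_le_mul_of_nonneg_left hbound (by positivity)
    _ = 2 * ε / R := by
        field_simp

theorem stmt19 (U : Set ℂ) (hU : IsOpen U) (h : ℕ → ℂ → ℂ)
    (hd : ∀ n : ℕ, DifferentiableOn ℂ (h n) U)
    (hre : TendstoLocallyUniformlyOn (fun (n : ℕ) (z : ℂ) => (h n z).re)
      (fun _ => 0) Filter.atTop U) :
    TendstoLocallyUniformlyOn (fun (n : ℕ) (z : ℂ) => deriv (h n) z)
      (fun _ => 0) Filter.atTop U := by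
  rw [tendstoLocallyUniformlyOn_iff_forall_isCompact hU] at hre ⊢
  intro K hKU hK
  obtain ⟨δ, hδ, hKδ⟩ := hK.exists_cthickening_subset_open hU hKU
  have hK' : IsCompact (cthickening δ K) := hK.cthickening
  have hreK' := hre (cthickening δ K) hKδ hK'
  rw [Metric.tendstoUniformlyOn_iff] at hreK' ⊢
  intro ε hε
  filter_upwards [hreK' (ε * δ / 4) (by positivity)] with n hn
  intro z hz
  have hball : closedBall z δ ⊆ cthickening δ K := closedBall_subset_cthickening hz δ
  have hbound : ‖deriv (h n) z‖ ≤ 2 * (ε * δ / 4) / δ := by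
    refine deriv_bound hU (hd n) hδ (hball.trans hKδ) fun w hw => ?_
    have := hn w (hball (sphere_subset_closedBall hw))
    simp only [Pi.zero_apply, dist_zero_left, Real.norm_eq_abs] at this
    exact le_of_lt (by simpa [abs_sub_comm] using this)
  have : 2 * (ε * δ / 4) / δ = ε / 2 := by field_simp; ring
  rw [this] at hbound
  simp only [Pi.zero_apply, dist_zero_left]
  calc ‖deriv (h n) z‖ ≤ ε / 2 := hbound
    _ < ε := by linarith
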